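/- arXiv:1312.4769 — 4 statements merged into one kernel-verified Lean document; each statement's English description precedes it below -/
import Mathlib

section
/- Let x = (t,u) and y be d-admissible arcs and let j ∈ ℤ. Set k = (t − u + 1)/|d| and V_j = {t + j + i·d : i = 0, 1, …, k−1}. Then Ext^j(x,y) ≠ 0 if and only if, writing y = (x', y'), either (x' ∈ V_j and y' ≤ u + j) or (y' ∈ V_j and x' ≥ t − d − 1 + j). -/
/- Combinatorial model of the triangulated category `T_w` generated by a `w`-spherical
object (`w ≤ -1`), via `d`-admissible arcs of the ∞-gon, where `d = w - 1`,
`|d| = 1 - w`, `|w| = -w`. -/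

namespace SphericalArcs

/-- An arc is a pair of integers `(t, u)`. -/
abbrev Arc : Type := ℤ × ℤ

/-- `(t,u)` is a `d`-admissible arc: `t > u`, `t - u ≥ |d| - 1 = -w` and
`t - u ≡ -1 (mod |d|)`, i.e. `(1 - w) ∣ (t - u + 1)`. -/
def Adm (w : ℤ) (a : Arc) : Prop :=
  a.2 < a.1 ∧ -w ≤ a.1 - a.2 ∧ (1 - w) ∣ (a.1 - a.2 + 1)

/-- `k(t,u) = (t - u + 1) / |d|`. -/
def kk (w : ℤ) (a : Arc) : ℤ := (a.1 - a.2 + 1) / (1 - w)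

/-- `c ∈ F⁺(a)`: `c = (x,y)` is `d`-admissible, `x = a.1 + i·d` for some
`0 ≤ i ≤ k(a) - 1`, and `y ≤ a.2`. -/
def Fplus (w : ℤ) (a c : Arc) : Prop :=
  Adm w c ∧ (∃ i : ℤ, 0 ≤ i ∧ i ≤ kk w a - 1 ∧ c.1 = a.1 + i * (w - 1)) ∧ c.2 ≤ a.2

/-- `c ∈ F⁻(a)`: `c = (x,y)` is `d`-admissible, `y = a.2 - i·d` for some
`0 ≤ i ≤ k(a) - 1`, and `x ≥ a.1`. -/
def Fminus (w : ℤ) (a c : Arc) : Prop :=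
  Adm w c ∧ (∃ i : ℤ, 0 ≤ i ∧ i ≤ kk w a - 1 ∧ c.2 = a.2 - i * (w - 1)) ∧ a.1 ≤ c.1

/-- The Serre functor: `S(t,u) = (t - w, u - w)`. -/
def Serre (w : ℤ) (a : Arc) : Arc := (a.1 - w, a.2 - w)

/-- `Hom(a,c) ≠ 0` iff `c ∈ F⁺(a) ∪ F⁻(S(a))`. -/
def HomNe (w : ℤ) (a c : Arc) : Prop := Fplus w a c ∨ Fminus w (Serre w a) c

/-- `Ext^j(a,b) ≠ 0` iff `Hom(a, Σ^j b) ≠ 0`, where `Σ^j b = (b.1 - j, b.2 - j)`. -/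
def ExtNe (w : ℤ) (j : ℤ) (a b : Arc) : Prop := HomNe w a (b.1 - j, b.2 - j)

/-- Two arcs `(t,u)` and `(t',u')` cross if `u < u' < t < t'` or `u' < u < t' < t`. -/
def Cross (a b : Arc) : Prop :=
  (a.2 < b.2 ∧ b.2 < a.1 ∧ a.1 < b.1) ∨ (b.2 < a.2 ∧ a.2 < b.1 ∧ b.1 < a.1)

/-- Two arcs share a vertex if `{t,u} ∩ {t',u'} ≠ ∅`. -/
def ShareVertex (a b : Arc) : Prop :=
  a.1 = b.1 ∨ a.1 = b.2 ∨ a.2 = b.1 ∨ a.2 = b.2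

/-- A `|w|`-Hom-configuration: a set `H` of `d`-admissible arcs such that a
`d`-admissible arc `h` belongs to `H` iff `Ext^i(x,h) = 0` for every `x ∈ H` and
`i ∈ {w+1, …, -1}`, and `Ext^i(x,h) = 0` for every `x ∈ H \ {h}` and `i ∈ {0, w}`. -/
def IsHomConfig (w : ℤ) (H : Set Arc) : Prop :=
  (∀ h ∈ H, Adm w h) ∧
  ∀ h : Arc, Adm w h →
    (h ∈ H ↔
      (∀ x ∈ H, ∀ i : ℤ, w + 1 ≤ i → i ≤ -1 → ¬ ExtNe w i x h) ∧
      (∀ x ∈ H, x ≠ h → ¬ ExtNe w 0 x h ∧ ¬ ExtNe w w x h))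

/-- `v` is an isolated vertex of `H`: it is not an endpoint of any arc of `H`. -/
def Isolated (H : Set Arc) (v : ℤ) : Prop := ∀ a ∈ H, a.1 ≠ v ∧ a.2 ≠ v

/-- `a ∈ H` is an overarc of `v`: `a.2 < v < a.1`. -/
def IsOverarc (H : Set Arc) (a : Arc) (v : ℤ) : Prop := a ∈ H ∧ a.2 < v ∧ v < a.1

/-- `a` is the smallest overarc of `v` in `H`. -/
def IsSmallestOverarc (H : Set Arc) (a : Arc) (v : ℤ) : Prop :=
  IsOverarc H a v ∧ ∀ b : Arc, IsOverarc H b v → b.2 ≤ a.2 ∧ a.1 ≤ b.1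

/-- The set of isolated vertices of `H` having no overarc in `H`. -/
def NoOverarcIsolated (H : Set Arc) : Set ℤ :=
  {v | Isolated H v ∧ ∀ a : Arc, ¬ IsOverarc H a v}

/-- A left `|w|`-Riedtmann configuration. -/
def IsLeftRiedtmann (w : ℤ) (C : Set Arc) : Prop :=
  (∀ c ∈ C, Adm w c) ∧
  (∀ x ∈ C, ∀ y ∈ C, x ≠ y → ∀ i : ℤ, w ≤ i → i ≤ 0 → ¬ ExtNe w i x y) ∧
  ∀ z : Arc, Adm w z → ∃ x ∈ C, ∃ i : ℤ, w + 1 ≤ i ∧ i ≤ 0 ∧ ExtNe w i x z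

/-- A right `|w|`-Riedtmann configuration. -/
def IsRightRiedtmann (w : ℤ) (C : Set Arc) : Prop :=
  (∀ c ∈ C, Adm w c) ∧
  (∀ x ∈ C, ∀ y ∈ C, x ≠ y → ∀ i : ℤ, w ≤ i → i ≤ 0 → ¬ ExtNe w i x y) ∧
  ∀ z : Arc, Adm w z → ∃ x ∈ C, ∃ i : ℤ, w + 1 ≤ i ∧ i ≤ 0 ∧ ExtNe w i z x

/-- Lemma 2.3: `Ext^j(x,y) ≠ 0` iff, writing `y = (x', y')`, either `x' ∈ V_j` and
`y' ≤ u + j`, or `y' ∈ V_j` and `x' ≥ t - d - 1 + j`, where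
`V_j = {t + j + i·d : i = 0, …, k - 1}`. -/
theorem stmt0 (w : ℤ) (hw : w ≤ -1) (x y : Arc) (hx : Adm w x) (hy : Adm w y) (j : ℤ) :
    ExtNe w j x y ↔
      ((∃ i : ℤ, 0 ≤ i ∧ i ≤ kk w x - 1 ∧ y.1 = x.1 + j + i * (w - 1)) ∧ y.2 ≤ x.2 + j) ∨
      ((∃ i : ℤ, 0 ≤ i ∧ i ≤ kk w x - 1 ∧ y.2 = x.1 + j + i * (w - 1)) ∧
        x.1 - (w - 1) - 1 + j ≤ y.1) := by
  have hk : kk w x * (1 - w) = x.1 - x.2 + 1 := Int.ediv_mul_cancel hx.2.2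
  obtain ⟨hy1, hy2, hy3⟩ := hy
  have hadm : Adm w (y.1 - j, y.2 - j) := by
    refine ⟨by simp only; omega, by simp only; omega, ?_⟩
    have : (y.1 - j, y.2 - j).1 - (y.1 - j, y.2 - j).2 + 1 = y.1 - y.2 + 1 := by ring
    rw [this]; exact hy3
  have hkS : kk w (Serre w x) = kk w x := by
    unfold kk Serre; norm_num
  constructor
  · rintro (⟨_, ⟨i, hi1, hi2, hi3⟩, h4⟩ | ⟨_, ⟨i, hi1, hi2, hi3⟩, h4⟩)
    · exact Or.inl ⟨⟨i, hi1, hi2, by simp at hi3; omega⟩, by simpa using h4⟩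
    · rw [hkS] at hi2
      refine Or.inr ⟨⟨kk w x - 1 - i, by omega, by omega, ?_⟩, ?_⟩
      · simp only [Serre] at hi3
        linear_combination hi3 + hk
      · simp only [Serre] at h4; omega
  · rintro (⟨⟨i, hi1, hi2, hi3⟩, h4⟩ | ⟨⟨i, hi1, hi2, hi3⟩, h4⟩)
    · exact Or.inl ⟨hadm, ⟨i, hi1, hi2, by simp; omega⟩, by simp; omega⟩
    · refine Or.inr ⟨hadm, ⟨kk w x - 1 - i, by omega, by rw [hkS]; omega, ?_⟩, ?_⟩
      · simp only [Serre]
        linear_combination hi3 - hk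
      · simp only [Serre]; omega

end SphericalArcs
end

section
/- If w ≤ −2, then for every d-admissible arc x and every i ∈ {w+1, …, −1} one has Ext^i(x,x) = 0. -/
/- Combinatorial model of the triangulated category `T_w` generated by a `w`-spherical
object (`w ≤ -1`), via `d`-admissible arcs of the ∞-gon, where `d = w - 1`,
`|d| = 1 - w`, `|w| = -w`. -/

namespace SphericalArcs

/-- Remark 2.4: if `w ≤ -2`, then for every `d`-admissible arc `x` and every
`i ∈ {w+1, …, -1}` one has `Ext^i(x,x) = 0`. -/
theorem stmt1 (w : ℤ) (hw : w ≤ -2) (x : Arc) (hx : Adm w x)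
    (i : ℤ) (hi1 : w + 1 ≤ i) (hi2 : i ≤ -1) :
    ¬ ExtNe w i x x := by
  rintro (⟨-, ⟨j, hj0, -, hc1⟩, -⟩ | ⟨-, ⟨j, hj0, -, hc2⟩, -⟩)
  · simp only [Serre] at hc1
    nlinarith [mul_nonneg hj0 (by linarith : (0:ℤ) ≤ 1 - w)]
  · simp only [Serre] at hc2
    nlinarith [mul_nonneg hj0 (by linarith : (0:ℤ) ≤ 1 - w)]

end SphericalArcs
end

section
/- For d-admissible arcs x and y, one has Ext^i(x,y) = 0 for all i ∈ {w, w+1, …, 0} if and only if x and y do not cross and do not share a vertex. -/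
/- Combinatorial model of the triangulated category `T_w` generated by a `w`-spherical
object (`w ≤ -1`), via `d`-admissible arcs of the ∞-gon, where `d = w - 1`,
`|d| = 1 - w`, `|w| = -w`. -/

namespace SphericalArcs

private lemma aux_q0 (m q r v : ℤ) (hm : 0 < m) (h : m * q + r = v) (hr : r < m) (hv : 0 < v) :
    0 ≤ q := by
  by_contra h'
  push_neg at h'
  have h1 : q ≤ -1 := by omega
  nlinarith [mul_le_mul_of_nonneg_left h1 hm.le]

private lemma aux_qk (m q r v k : ℤ) (hm : 0 < m) (h : m * q + r = v) (hr : 0 ≤ r)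
    (hv : v < m * k) : q ≤ k - 1 := by
  by_contra h'
  push_neg at h'
  have h1 : k ≤ q := by omega
  nlinarith [mul_le_mul_of_nonneg_left h1 hm.le]

private lemma aux_rle (m v r e : ℤ) (hm : 0 < m) (hv : 0 < v) (hr : r < m)
    (he : v - r = m * e) : r ≤ v := by
  rcases le_or_gt 0 e with h | h
  · nlinarith [mul_nonneg hm.le h]
  · have h1 : e ≤ -1 := by omega
    nlinarith [mul_le_mul_of_nonneg_left h1 hm.le]

/-- Lemma 3.1: `Ext^i(x,y) = 0` for all `i ∈ {w, …, 0}` iff `x` and `y` do not cross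
and do not share a vertex. -/
theorem stmt2 (w : ℤ) (hw : w ≤ -1) (x y : Arc) (hx : Adm w x) (hy : Adm w y) :
    (∀ i : ℤ, w ≤ i → i ≤ 0 → ¬ ExtNe w i x y) ↔
      (¬ Cross x y ∧ ¬ ShareVertex x y) := by
  obtain ⟨t, u⟩ := x
  obtain ⟨a, b⟩ := y
  obtain ⟨hxu, hxw, kx, hkx⟩ := hx
  obtain ⟨hyu, hyw, ky, hky⟩ := hy
  dsimp only at hxu hxw hkx hyu hyw hky
  have hm : 2 ≤ 1 - w := by omega
  have hkx1 : 1 ≤ kx := by nlinarith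
  have hky1 : 1 ≤ ky := by nlinarith
  have hkkx : kk w (t, u) = kx := by
    show (t - u + 1) / (1 - w) = kx
    rw [hkx]
    exact Int.mul_ediv_cancel_left kx (by omega)
  have hkkS : kk w (Serre w (t, u)) = kx := by
    show (t - w - (u - w) + 1) / (1 - w) = kx
    rw [show t - w - (u - w) + 1 = (1 - w) * kx by linarith]
    exact Int.mul_ediv_cancel_left kx (by omega)
  have admc : ∀ j : ℤ, Adm w (a - j, b - j) := by
    intro j
    refine ⟨by dsimp only; omega, by dsimp only; omega, ⟨ky, by dsimp only; linarith⟩⟩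
  constructor
  · intro hvan
    have key : ¬ (Cross (t, u) (a, b) ∨ ShareVertex (t, u) (a, b)) := by
      rintro (h | h)
      · rcases h with ⟨h1, h2, h3⟩ | ⟨h1, h2, h3⟩
        · -- u < b < t < a : Fminus with j = r + w
          dsimp only at h1 h2 h3
          set r := (b - u) % (1 - w) with hrdef
          set q := (b - u) / (1 - w) with hqdef
          have hdm : (1 - w) * q + r = b - u := Int.mul_ediv_add_emod (b - u) (1 - w)
          have hr0 : 0 ≤ r := Int.emod_nonneg _ (by omega)
          have hrm : r < 1 - w := Int.emod_lt_of_pos _ (by omega)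
          have hq0 : 0 ≤ q := aux_q0 (1 - w) q r (b - u) (by omega) hdm hrm (by omega)
          have hqk : q ≤ kx - 1 :=
            aux_qk (1 - w) q r (b - u) kx (by omega) hdm hr0 (by nlinarith)
          have he : a - t - r = (1 - w) * (ky + q - kx) := by
            linear_combination hky - hdm - hkx
          have har : r ≤ a - t := aux_rle (1 - w) (a - t) r (ky + q - kx) (by omega)
            (by omega) hrm he
          refine hvan (r + w) (by omega) (by omega) (Or.inr ⟨admc (r + w), ⟨q, hq0, ?_, ?_⟩, ?_⟩)
          · rw [hkkS]; exact hqk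
          · show b - (r + w) = u - w - q * (w - 1)
            linear_combination -hdm
          · show t - w ≤ a - (r + w)
            omega
        · -- b < u < a < t : Fplus with j = -r
          dsimp only at h1 h2 h3
          set r := (t - a) % (1 - w) with hrdef
          set q := (t - a) / (1 - w) with hqdef
          have hdm : (1 - w) * q + r = t - a := Int.mul_ediv_add_emod (t - a) (1 - w)
          have hr0 : 0 ≤ r := Int.emod_nonneg _ (by omega)
          have hrm : r < 1 - w := Int.emod_lt_of_pos _ (by omega)
          have hq0 : 0 ≤ q := aux_q0 (1 - w) q r (t - a) (by omega) hdm hrm (by omega)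
          have hqk : q ≤ kx - 1 :=
            aux_qk (1 - w) q r (t - a) kx (by omega) hdm hr0 (by nlinarith)
          have he : u - b - r = (1 - w) * (ky + q - kx) := by
            linear_combination hky - hdm - hkx
          have hbr : r ≤ u - b := aux_rle (1 - w) (u - b) r (ky + q - kx) (by omega)
            (by omega) hrm he
          refine hvan (-r) (by omega) (by omega) (Or.inl ⟨admc (-r), ⟨q, hq0, ?_, ?_⟩, ?_⟩)
          · rw [hkkx]; exact hqk
          · show a - (-r) = t + q * (w - 1)
            linear_combination hdm
          · show b - (-r) ≤ u
            omega
      · rcases h with h1 | h1 | h1 | h1 <;> dsimp only at h1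
        · -- t = a
          by_cases hb : b ≤ u
          · refine hvan 0 (by omega) le_rfl (Or.inl ⟨admc 0, ⟨0, le_rfl, ?_, ?_⟩, ?_⟩)
            · rw [hkkx]; omega
            · show a - 0 = t + 0 * (w - 1); omega
            · show b - 0 ≤ u; omega
          · have hbu : b - u = (1 - w) * (kx - ky) := by
              linear_combination hkx - hky - h1
            have hpos : 1 ≤ kx - ky := by nlinarith
            refine hvan w le_rfl (by omega)
              (Or.inr ⟨admc w, ⟨kx - ky, by omega, ?_, ?_⟩, ?_⟩)
            · rw [hkkS]; omega
            · show b - w = u - w - (kx - ky) * (w - 1)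
              linear_combination hbu
            · show t - w ≤ a - w; omega
        · -- t = b
          refine hvan 0 (by omega) le_rfl (Or.inr ⟨admc 0, ⟨kx - 1, by omega, ?_, ?_⟩, ?_⟩)
          · rw [hkkS]
          · show b - 0 = u - w - (kx - 1) * (w - 1)
            linear_combination hkx - h1
          · show t - w ≤ a - 0; omega
        · -- u = a
          refine hvan w le_rfl (by omega)
            (Or.inl ⟨admc w, ⟨kx - 1, by omega, ?_, ?_⟩, ?_⟩)
          · rw [hkkx]
          · show a - w = t + (kx - 1) * (w - 1)
            linear_combination -hkx - h1
          · show b - w ≤ u; omega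
        · -- u = b
          by_cases ha : a ≤ t
          · have hta : t - a = (1 - w) * (kx - ky) := by
              linear_combination hkx - hky + h1
            have hpos : 0 ≤ kx - ky := by nlinarith
            refine hvan 0 (by omega) le_rfl (Or.inl ⟨admc 0, ⟨kx - ky, hpos, ?_, ?_⟩, ?_⟩)
            · rw [hkkx]; omega
            · show a - 0 = t + (kx - ky) * (w - 1)
              linear_combination -hta
            · show b - 0 ≤ u; omega
          · refine hvan w le_rfl (by omega)
              (Or.inr ⟨admc w, ⟨0, le_rfl, ?_, ?_⟩, ?_⟩)
            · rw [hkkS]; omega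
            · show b - w = u - w - 0 * (w - 1); omega
            · show t - w ≤ a - w; omega
    exact ⟨fun h => key (Or.inl h), fun h => key (Or.inr h)⟩
  · rintro ⟨hnc, hns⟩ j hj1 hj2 hext
    rcases hext with ⟨hadm, ⟨i, hi0, hik, heq⟩, hle⟩ | ⟨hadm, ⟨i, hi0, hik, heq⟩, hle⟩
    · rw [hkkx] at hik
      have heq' : a - j = t + i * (w - 1) := heq
      have hle' : b - j ≤ u := hle
      have h1 : a - j ≤ t := by nlinarith [mul_nonneg hi0 (show (0:ℤ) ≤ 1 - w by omega)]
      have h2 : u - w ≤ a - j := by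
        nlinarith [mul_nonneg (show (0:ℤ) ≤ kx - 1 - i by omega)
          (show (0:ℤ) ≤ 1 - w by omega)]
      simp only [Cross, ShareVertex] at hnc hns
      omega
    · rw [hkkS] at hik
      have heq' : b - j = u - w - i * (w - 1) := heq
      have hle' : t - w ≤ a - j := hle
      have h1 : u - w ≤ b - j := by
        nlinarith [mul_nonneg hi0 (show (0:ℤ) ≤ 1 - w by omega)]
      have h2 : b - j ≤ t := by
        nlinarith [mul_nonneg (show (0:ℤ) ≤ kx - 1 - i by omega)
          (show (0:ℤ) ≤ 1 - w by omega)]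
      simp only [Cross, ShareVertex] at hnc hns
      omega


end SphericalArcs
end

section
/- Let H be a |w|-Hom-configuration and let (t,u) ∈ H. Then there are precisely |w| − 1 isolated vertices whose smallest overarc is (t,u). -/
/- Combinatorial model of the triangulated category `T_w` generated by a `w`-spherical
object (`w ≤ -1`), via `d`-admissible arcs of the ∞-gon, where `d = w - 1`,
`|d| = 1 - w`, `|w| = -w`. -/

namespace SphericalArcs

/-! ### Auxiliary machinery for the proof of Lemma 3.2 -/

/-- Two arcs are "separated": disjoint or strictly nested. -/
def Sep (x h : Arc) : Prop :=
  h.1 < x.2 ∨ x.1 < h.2 ∨ (x.2 < h.2 ∧ h.1 < x.1) ∨ (h.2 < x.2 ∧ x.1 < h.1)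

/-- `x` is covered (relative to the arc `a`) if it lies weakly under some arc of `H`
strictly nested inside `a`. -/
def Covered (H : Set Arc) (a : Arc) (x : ℤ) : Prop :=
  ∃ b ∈ H, a.2 < b.2 ∧ b.1 < a.1 ∧ b.2 ≤ x ∧ x ≤ b.1

lemma adm_shift {w : ℤ} {h : Arc} (hh : Adm w h) (c : ℤ) :
    Adm w (h.1 + c, h.2 + c) := by
  obtain ⟨h1, h2, h3⟩ := hh
  refine ⟨by dsimp only; linarith, by dsimp only; linarith, ?_⟩
  have e : (h.1 + c, h.2 + c).1 - (h.1 + c, h.2 + c).2 + 1 = h.1 - h.2 + 1 := by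
    dsimp only; ring
  rw [e]; exact h3

lemma kk_eq {w : ℤ} (hw : w ≤ -1) {x : Arc} {k : ℤ} (hk : x.1 - x.2 + 1 = (1 - w) * k) :
    kk w x = k := by
  rw [kk, hk]; exact Int.mul_ediv_cancel_left k (by omega)

lemma adm_kpos {w : ℤ} (hw : w ≤ -1) {x : Arc} (hx : Adm w x) {k : ℤ}
    (hk : x.1 - x.2 + 1 = (1 - w) * k) : 1 ≤ k := by
  have h1 : (0:ℤ) < (1 - w) * k := by
    rw [← hk]; linarith [hx.2.1]
  rcases le_or_gt k 0 with h | h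
  · have : (1 - w) * k ≤ 0 := mul_nonpos_iff.mpr (Or.inl ⟨by omega, h⟩)
    linarith
  · omega

/-- Existence of Ext via `F⁺`. -/
lemma extA {w : ℤ} (hw : w ≤ -1) {x h : Arc} (hx : Adm w x) (hh : Adm w h)
    (hb1 : x.2 ≤ h.1) (hb2 : h.1 ≤ x.1)
    (hb3 : h.2 ≤ x.2 - (x.1 - h.1) % (1 - w)) :
    ∃ i : ℤ, w ≤ i ∧ i ≤ 0 ∧ ExtNe w i x h := by
  have hm : (0:ℤ) < 1 - w := by omega
  obtain ⟨k, hk⟩ := hx.2.2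
  have hk1 : 1 ≤ k := adm_kpos hw hx hk
  set s := (x.1 - h.1) % (1 - w) with hs
  have hs0 : 0 ≤ s := Int.emod_nonneg _ (by omega)
  have hs1 : s < 1 - w := Int.emod_lt_of_pos _ hm
  set j := (x.1 - h.1) / (1 - w) with hj
  have hdiv : (1 - w) * j + s = x.1 - h.1 := Int.mul_ediv_add_emod _ _
  have hj0 : 0 ≤ j := Int.ediv_nonneg (by omega) (by omega)
  have hjk : j ≤ k - 1 := by
    have h1 : (1 - w) * j < (1 - w) * k := by linarith
    have := lt_of_mul_lt_mul_left h1 (le_of_lt hm)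
    omega
  refine ⟨-s, by omega, by omega, ?_⟩
  unfold ExtNe HomNe
  left
  rw [sub_neg_eq_add, sub_neg_eq_add]
  refine ⟨adm_shift hh s, ⟨j, hj0, ?_, ?_⟩, ?_⟩
  · rw [kk_eq hw hk]; exact hjk
  · show h.1 + s = x.1 + j * (w - 1)
    linear_combination hdiv
  · show h.2 + s ≤ x.2
    linarith

/-- Existence of Ext via `F⁻(S(x))`. -/
lemma extB {w : ℤ} (hw : w ≤ -1) {x h : Arc} (hx : Adm w x) (hh : Adm w h)
    (hb1 : x.2 ≤ h.2) (hb2 : h.2 ≤ x.1)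
    (hb3 : x.1 + (h.2 - x.2) % (1 - w) ≤ h.1) :
    ∃ i : ℤ, w ≤ i ∧ i ≤ 0 ∧ ExtNe w i x h := by
  have hm : (0:ℤ) < 1 - w := by omega
  obtain ⟨k, hk⟩ := hx.2.2
  have hk1 : 1 ≤ k := adm_kpos hw hx hk
  set s := (h.2 - x.2) % (1 - w) with hs
  have hs0 : 0 ≤ s := Int.emod_nonneg _ (by omega)
  have hs1 : s < 1 - w := Int.emod_lt_of_pos _ hm
  set j := (h.2 - x.2) / (1 - w) with hj
  have hdiv : (1 - w) * j + s = h.2 - x.2 := Int.mul_ediv_add_emod _ _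
  have hj0 : 0 ≤ j := Int.ediv_nonneg (by omega) (by omega)
  have hjk : j ≤ k - 1 := by
    have h1 : (1 - w) * j < (1 - w) * k := by linarith
    have := lt_of_mul_lt_mul_left h1 (le_of_lt hm)
    omega
  have hkS : (Serre w x).1 - (Serre w x).2 + 1 = (1 - w) * k := by
    show x.1 - w - (x.2 - w) + 1 = (1 - w) * k
    linarith
  refine ⟨s + w, by omega, by omega, ?_⟩
  unfold ExtNe HomNe
  right
  have hAdm : Adm w (h.1 - (s + w), h.2 - (s + w)) := by
    have := adm_shift hh (-(s + w))
    simpa [sub_eq_add_neg] using this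
  refine ⟨hAdm, ⟨j, hj0, ?_, ?_⟩, ?_⟩
  · rw [kk_eq hw hkS]; exact hjk
  · show h.2 - (s + w) = x.2 - w - j * (w - 1)
    linear_combination -hdiv
  · show x.1 - w ≤ h.1 - (s + w)
    linarith

/-- Necessary positional bounds for a nonzero Ext in degrees `w ≤ i ≤ 0`. -/
lemma ext_bounds {w : ℤ} (hw : w ≤ -1) {x h : Arc} (hx : Adm w x) {i : ℤ}
    (hiw : w ≤ i) (hi0 : i ≤ 0) (hE : ExtNe w i x h) :
    (x.2 ≤ h.1 ∧ h.1 ≤ x.1 ∧ h.2 ≤ x.2) ∨ (x.2 ≤ h.2 ∧ h.2 ≤ x.1 ∧ x.1 ≤ h.1) := by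
  obtain ⟨k, hk⟩ := hx.2.2
  have hk1 : 1 ≤ k := adm_kpos hw hx hk
  have hm : (0:ℤ) < 1 - w := by omega
  obtain hF | hF := hE
  · obtain ⟨-, ⟨j, hj0, hjk, hc1⟩, hc2⟩ := hF
    rw [kk_eq hw hk] at hjk
    have hc1' : h.1 - i = x.1 + j * (w - 1) := hc1
    have hc2' : h.2 - i ≤ x.2 := hc2
    left
    have e1 : j * (w - 1) = -(j * (1 - w)) := by ring
    have e2 : (k - 1) * (1 - w) + (1 - w) = (1 - w) * k := by ring
    have e3 : j * (1 - w) ≤ (k - 1) * (1 - w) :=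
      mul_le_mul_of_nonneg_right hjk (by omega)
    have e4 : 0 ≤ j * (1 - w) := mul_nonneg hj0 (by omega)
    refine ⟨by linarith, by linarith, by linarith⟩
  · obtain ⟨-, ⟨j, hj0, hjk, hc2⟩, hc1⟩ := hF
    have hkS : (Serre w x).1 - (Serre w x).2 + 1 = (1 - w) * k := by
      show x.1 - w - (x.2 - w) + 1 = (1 - w) * k
      linarith
    rw [kk_eq hw hkS] at hjk
    have hc2' : h.2 - i = x.2 - w - j * (w - 1) := hc2
    have hc1' : x.1 - w ≤ h.1 - i := hc1
    right
    have e1 : j * (w - 1) = -(j * (1 - w)) := by ring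
    have e2 : (k - 1) * (1 - w) + (1 - w) = (1 - w) * k := by ring
    have e3 : j * (1 - w) ≤ (k - 1) * (1 - w) :=
      mul_le_mul_of_nonneg_right hjk (by omega)
    have e4 : 0 ≤ j * (1 - w) := mul_nonneg hj0 (by omega)
    refine ⟨by linarith, by linarith, by linarith⟩

/-- Separated arcs have no Ext in degrees `w ≤ i ≤ 0`. -/
lemma noExt_of_sep {w : ℤ} (hw : w ≤ -1) {x h : Arc} (hx : Adm w x)
    (hsep : Sep x h) {i : ℤ} (hiw : w ≤ i) (hi0 : i ≤ 0) : ¬ ExtNe w i x h := by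
  intro hE
  rcases ext_bounds hw hx hiw hi0 hE with ⟨p1, p2, p3⟩ | ⟨p1, p2, p3⟩ <;>
    rcases hsep with hc | hc | ⟨hc1, hc2⟩ | ⟨hc1, hc2⟩ <;>
      linarith [hx.1]

/-- Distinct arcs of a Hom-configuration are separated. -/
lemma sep_of_mem {w : ℤ} (hw : w ≤ -1) {H : Set Arc} (hH : IsHomConfig w H)
    {x h : Arc} (hxH : x ∈ H) (hhH : h ∈ H) (hne : x ≠ h) : Sep x h := by
  have hx : Adm w x := hH.1 x hxH
  have hh : Adm w h := hH.1 h hhH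
  have hm : (0:ℤ) < 1 - w := by omega
  have noxh : ∀ i : ℤ, w ≤ i → i ≤ 0 → ¬ ExtNe w i x h := by
    have hc := (hH.2 h hh).mp hhH
    intro i hi1 hi2
    rcases eq_or_lt_of_le hi1 with rfl | hlt1
    · exact (hc.2 x hxH hne).2
    rcases eq_or_lt_of_le hi2 with rfl | hlt2
    · exact (hc.2 x hxH hne).1
    · exact hc.1 x hxH i (by omega) (by omega)
  have nohx : ∀ i : ℤ, w ≤ i → i ≤ 0 → ¬ ExtNe w i h x := by
    have hc := (hH.2 x hx).mp hxH
    intro i hi1 hi2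
    rcases eq_or_lt_of_le hi1 with rfl | hlt1
    · exact (hc.2 h hhH (Ne.symm hne)).2
    rcases eq_or_lt_of_le hi2 with rfl | hlt2
    · exact (hc.2 h hhH (Ne.symm hne)).1
    · exact hc.1 h hhH i (by omega) (by omega)
  by_contra hsep
  unfold Sep at hsep
  push_neg at hsep
  obtain ⟨s1, s2, s3, s4⟩ := hsep
  rcases le_or_gt h.2 x.2 with hc | hc
  · rcases le_or_gt h.1 x.1 with hd | hd
    · by_cases he : h.2 ≤ x.2 - (x.1 - h.1) % (1 - w)
      · obtain ⟨i, hi1, hi2, hE⟩ := extA hw hx hh s1 hd he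
        exact noxh i hi1 hi2 hE
      · push_neg at he
        have hs0 : 0 ≤ (x.1 - h.1) % (1 - w) := Int.emod_nonneg _ (by omega)
        have hs1 : (x.1 - h.1) % (1 - w) < 1 - w := Int.emod_lt_of_pos _ hm
        have hge : (x.1 - h.1) % (1 - w) ≤ x.1 - h.1 := by
          have hq := Int.mul_ediv_add_emod (x.1 - h.1) (1 - w)
          have : 0 ≤ (1 - w) * ((x.1 - h.1) / (1 - w)) :=
            mul_nonneg (by omega) (Int.ediv_nonneg (by omega) (by omega))
          linarith
        have hmod : (x.2 - h.2) % (1 - w) = x.2 - h.2 :=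
          Int.emod_eq_of_lt (by omega) (by omega)
        obtain ⟨i, hi1, hi2, hE⟩ := extB hw hh hx hc s1 (by rw [hmod]; omega)
        exact nohx i hi1 hi2 hE
    · have he : h.2 = x.2 := by
        rcases lt_or_eq_of_le hc with h' | h'
        · exact absurd (s4 h') (by omega)
        · exact h'
      have hmod : (h.2 - x.2) % (1 - w) = 0 := by rw [he]; simp
      obtain ⟨i, hi1, hi2, hE⟩ :=
        extB hw hx hh (le_of_eq he.symm) (by linarith [hx.1]) (by rw [hmod]; omega)
      exact noxh i hi1 hi2 hE
  · rcases le_or_gt x.1 h.1 with hd | hd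
    · by_cases he : x.1 + (h.2 - x.2) % (1 - w) ≤ h.1
      · obtain ⟨i, hi1, hi2, hE⟩ := extB hw hx hh (le_of_lt hc) s2 he
        exact noxh i hi1 hi2 hE
      · push_neg at he
        have hs0 : 0 ≤ (h.2 - x.2) % (1 - w) := Int.emod_nonneg _ (by omega)
        have hs1 : (h.2 - x.2) % (1 - w) < 1 - w := Int.emod_lt_of_pos _ hm
        have hge : (h.2 - x.2) % (1 - w) ≤ h.2 - x.2 := by
          have hq := Int.mul_ediv_add_emod (h.2 - x.2) (1 - w)
          have : 0 ≤ (1 - w) * ((h.2 - x.2) / (1 - w)) :=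
            mul_nonneg (by omega) (Int.ediv_nonneg (by omega) (by omega))
          linarith
        have hmod : (h.1 - x.1) % (1 - w) = h.1 - x.1 :=
          Int.emod_eq_of_lt (by omega) (by omega)
        obtain ⟨i, hi1, hi2, hE⟩ := extA hw hh hx s2 hd (by rw [hmod]; omega)
        exact nohx i hi1 hi2 hE
    · exact absurd (s3 hc) (by omega)

/-- An admissible arc separated from every arc of a Hom-configuration belongs to it. -/
lemma mem_of_sep {w : ℤ} (hw : w ≤ -1) {H : Set Arc} (hH : IsHomConfig w H)
    {z : Arc} (hz : Adm w z) (hsep : ∀ x ∈ H, Sep x z) : z ∈ H := by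
  refine (hH.2 z hz).mpr ⟨?_, ?_⟩
  · intro x hx i hi1 hi2
    exact noExt_of_sep hw (hH.1 x hx) (hsep x hx) (by omega) (by omega)
  · intro x hx _
    exact ⟨noExt_of_sep hw (hH.1 x hx) (hsep x hx) (by omega) le_rfl,
           noExt_of_sep hw (hH.1 x hx) (hsep x hx) le_rfl (by omega)⟩

/-- Lemma 3.2: if `H` is a `|w|`-Hom-configuration and `(t,u) ∈ H`, then there are
precisely `|w| - 1` isolated vertices whose smallest overarc is `(t,u)`. -/
theorem stmt3 (w : ℤ) (hw : w ≤ -1) (H : Set Arc) (hH : IsHomConfig w H)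
    (a : Arc) (ha : a ∈ H) :
    {v : ℤ | Isolated H v ∧ IsSmallestOverarc H a v}.Finite ∧
    ({v : ℤ | Isolated H v ∧ IsSmallestOverarc H a v}.ncard : ℤ) = -w - 1 := by
  classical
  have ha' : Adm w a := hH.1 a ha
  have hm : (0:ℤ) < 1 - w := by omega
  -- the set of arcs strictly nested inside `a` is finite
  have hNfin : {b : Arc | b ∈ H ∧ a.2 < b.2 ∧ b.1 < a.1}.Finite := by
    have himg : Prod.fst '' {b : Arc | b ∈ H ∧ a.2 < b.2 ∧ b.1 < a.1} ⊆
        Set.Ioo a.2 a.1 := by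
      rintro y ⟨b, ⟨hbH, hb2, hb1⟩, rfl⟩
      exact ⟨lt_trans hb2 (hH.1 b hbH).1, hb1⟩
    refine Set.Finite.of_finite_image ((Set.finite_Ioo a.2 a.1).subset himg) ?_
    rintro b ⟨hbH, -, -⟩ c ⟨hcH, -, -⟩ hbc
    by_contra hne
    have hb := hH.1 b hbH
    have hc := hH.1 c hcH
    rcases sep_of_mem hw hH hbH hcH hne with h | h | ⟨h1, h2⟩ | ⟨h1, h2⟩ <;>
      linarith [hb.1, hc.1]
  set N : Finset Arc := hNfin.toFinset with hN
  have hNmem : ∀ b : Arc, b ∈ N ↔ b ∈ H ∧ a.2 < b.2 ∧ b.1 < a.1 := by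
    intro b; rw [hN, Set.Finite.mem_toFinset]; rfl
  -- the "children": maximal nested arcs
  set Ch : Finset Arc := N.filter (fun b => ∀ c ∈ N, ¬(c.2 < b.2 ∧ b.1 < c.1)) with hCh
  have hChN : ∀ b ∈ Ch, b ∈ H ∧ a.2 < b.2 ∧ b.1 < a.1 :=
    fun b hb => (hNmem b).mp (Finset.mem_filter.mp hb).1
  -- covered vertices are exactly those under a child
  have hcov : ∀ x : ℤ, Covered H a x ↔ ∃ b ∈ Ch, b.2 ≤ x ∧ x ≤ b.1 := by
    intro x
    constructor
    · rintro ⟨b, hbH, hb2, hb1, hbx2, hbx1⟩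
      set Nf : Finset Arc := N.filter (fun c => c.2 ≤ x ∧ x ≤ c.1) with hNf
      have hbNf : b ∈ Nf :=
        Finset.mem_filter.mpr ⟨(hNmem b).mpr ⟨hbH, hb2, hb1⟩, hbx2, hbx1⟩
      obtain ⟨d, hdNf, hdmax⟩ := Finset.exists_max_image Nf (fun c => c.1 - c.2) ⟨b, hbNf⟩
      obtain ⟨hdN, hdx⟩ := Finset.mem_filter.mp hdNf
      refine ⟨d, Finset.mem_filter.mpr ⟨hdN, ?_⟩, hdx⟩
      rintro c hcN ⟨hcc1, hcc2⟩
      have hcNf : c ∈ Nf :=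
        Finset.mem_filter.mpr ⟨hcN, by constructor <;> linarith [hdx.1, hdx.2]⟩
      have := hdmax c hcNf
      linarith
    · rintro ⟨b, hb, hx2, hx1⟩
      obtain ⟨hbH, h2, h1⟩ := hChN b hb
      exact ⟨b, hbH, h2, h1, hx2, hx1⟩
  -- distinct children are disjoint
  have hdisj : ∀ b ∈ Ch, ∀ c ∈ Ch, b ≠ c → b.1 < c.2 ∨ c.1 < b.2 := by
    intro b hb c hc hne
    obtain ⟨hbN, hbmax⟩ := Finset.mem_filter.mp hb
    obtain ⟨hcN, hcmax⟩ := Finset.mem_filter.mp hc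
    obtain ⟨hbH, -, -⟩ := (hNmem b).mp hbN
    obtain ⟨hcH, -, -⟩ := (hNmem c).mp hcN
    rcases sep_of_mem hw hH hbH hcH hne with h | h | ⟨h1, h2⟩ | ⟨h1, h2⟩
    · right; exact h
    · left; exact h
    · exact absurd ⟨h1, h2⟩ (hcmax b hbN)
    · exact absurd ⟨h1, h2⟩ (hbmax c hcN)
  -- key counting lemma: the number of covered vertices in a suitable window is
  -- divisible by `1 - w`
  have key : ∀ V : Finset ℤ,
      (∀ b ∈ Ch, (∃ y ∈ V, b.2 ≤ y ∧ y ≤ b.1) → ∀ z : ℤ, b.2 ≤ z → z ≤ b.1 → z ∈ V) →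
      (1 - w) ∣ (((V.filter (fun x => Covered H a x)).card : ℤ)) := by
    intro V hV
    set Ch' : Finset Arc := Ch.filter (fun b => b.2 ∈ V) with hCh'
    have hdisj' : ∀ b ∈ Ch', ∀ c ∈ Ch', b ≠ c →
        Disjoint (Finset.Icc b.2 b.1) (Finset.Icc c.2 c.1) := by
      intro b hb c hc hne
      have hd := hdisj b (Finset.mem_filter.mp hb).1 c (Finset.mem_filter.mp hc).1 hne
      rw [Finset.disjoint_left]
      intro z hzb hzc
      rw [Finset.mem_Icc] at hzb hzc
      rcases hd with h | h <;> linarith [hzb.1, hzb.2, hzc.1, hzc.2]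
    have hUnion : V.filter (fun x => Covered H a x) =
        Ch'.biUnion (fun b => Finset.Icc b.2 b.1) := by
      ext x
      simp only [Finset.mem_filter, Finset.mem_biUnion, Finset.mem_Icc]
      constructor
      · rintro ⟨hxV, hx⟩
        obtain ⟨b, hb, h2, h1⟩ := (hcov x).mp hx
        have hble : b.2 ≤ b.1 := le_of_lt (hH.1 b (hChN b hb).1).1
        have hb2V : b.2 ∈ V := hV b hb ⟨x, hxV, h2, h1⟩ b.2 le_rfl hble
        exact ⟨b, Finset.mem_filter.mpr ⟨hb, hb2V⟩, h2, h1⟩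
      · rintro ⟨b, hb', h2, h1⟩
        obtain ⟨hb, hb2V⟩ := Finset.mem_filter.mp hb'
        have hble : b.2 ≤ b.1 := le_of_lt (hH.1 b (hChN b hb).1).1
        exact ⟨hV b hb ⟨b.2, hb2V, le_rfl, hble⟩ x h2 h1, (hcov x).mpr ⟨b, hb, h2, h1⟩⟩
    rw [hUnion, Finset.card_biUnion hdisj', Nat.cast_sum]
    apply Finset.dvd_sum
    intro b hb
    have hbH := (hChN b (Finset.mem_filter.mp hb).1).1
    have hadm := hH.1 b hbH
    rw [Int.card_Icc, Int.toNat_of_nonneg (by linarith [hadm.1])]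
    have e : b.1 + 1 - b.2 = b.1 - b.2 + 1 := by ring
    rw [e]
    exact hadm.2.2
  -- the finset of isolated vertices with smallest overarc `a`
  set Fr : Finset ℤ := (Finset.Ioo a.2 a.1).filter (fun v => ¬ Covered H a v) with hFr
  have hFrMem : ∀ v : ℤ, v ∈ Fr ↔ (a.2 < v ∧ v < a.1) ∧ ¬ Covered H a v := by
    intro v; rw [hFr, Finset.mem_filter, Finset.mem_Ioo]
  -- the set in the statement equals `Fr`
  have hsetEq : {v : ℤ | Isolated H v ∧ IsSmallestOverarc H a v} = ↑Fr := by
    ext v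
    simp only [Set.mem_setOf_eq, Finset.mem_coe, hFrMem]
    constructor
    · rintro ⟨hiso, ⟨⟨-, hv2, hv1⟩, hmin⟩⟩
      refine ⟨⟨hv2, hv1⟩, ?_⟩
      rintro ⟨b, hbH, hb2, hb1, hbx2, hbx1⟩
      have hne1 := (hiso b hbH).1
      have hne2 := (hiso b hbH).2
      have hov : IsOverarc H b v :=
        ⟨hbH, lt_of_le_of_ne hbx2 hne2, lt_of_le_of_ne hbx1 (Ne.symm hne1)⟩
      have := (hmin b hov).2
      linarith
    · rintro ⟨⟨hv2, hv1⟩, hncov⟩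
      have hiso : Isolated H v := by
        intro b hbH
        by_cases hba : b = a
        · subst hba; exact ⟨by omega, by omega⟩
        · have hbadm := hH.1 b hbH
          rcases sep_of_mem hw hH ha hbH (Ne.symm hba) with h | h | ⟨h1, h2⟩ | ⟨h1, h2⟩
          · exact ⟨by omega, by linarith [hbadm.1]⟩
          · exact ⟨by linarith [hbadm.1], by omega⟩
          · constructor
            · intro hEq
              exact hncov ⟨b, hbH, h1, h2, by linarith [hbadm.1], by omega⟩
            · intro hEq
              exact hncov ⟨b, hbH, h1, h2, by omega, by linarith [hbadm.1]⟩
          · exact ⟨by omega, by omega⟩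
      refine ⟨hiso, ⟨⟨ha, hv2, hv1⟩, ?_⟩⟩
      rintro b ⟨hbH, hb2, hb1⟩
      by_cases hba : b = a
      · subst hba; exact ⟨le_rfl, le_rfl⟩
      · rcases sep_of_mem hw hH ha hbH (Ne.symm hba) with h | h | ⟨h1, h2⟩ | ⟨h1, h2⟩
        · exact absurd rfl (by omega : ¬ (0:ℤ) = 0)
        · exact absurd rfl (by omega : ¬ (0:ℤ) = 0)
        · exact absurd ⟨b, hbH, h1, h2, le_of_lt hb2, le_of_lt hb1⟩ hncov
        · exact ⟨le_of_lt h1, le_of_lt h2⟩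
  -- insertion lemma: no two free vertices at distance `≡ -1 (mod 1-w)`
  have hins : ∀ v v' : ℤ, v ∈ Fr → v' ∈ Fr → v < v' → (1 - w) ∣ (v' - v + 1) → False := by
    intro v v' hv hv' hlt hdvd
    obtain ⟨⟨hvl, hvr⟩, hvC⟩ := (hFrMem v).mp hv
    obtain ⟨⟨hv'l, hv'r⟩, hv'C⟩ := (hFrMem v').mp hv'
    have hz : Adm w ((v', v) : Arc) := by
      refine ⟨hlt, ?_, by simpa using hdvd⟩
      have := Int.le_of_dvd (by omega) hdvd
      omega
    have hzH : ((v', v) : Arc) ∈ H := by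
      apply mem_of_sep hw hH hz
      intro x hx
      by_cases hxa : x = a
      · subst hxa
        right; right; left
        exact ⟨hvl, hv'r⟩
      · have hxadm := hH.1 x hx
        rcases sep_of_mem hw hH ha hx (Ne.symm hxa) with h | h | ⟨h1, h2⟩ | ⟨h1, h2⟩
        · right; left; show x.1 < v; omega
        · left; show v' < x.2; omega
        · have hxv : ¬ (x.2 ≤ v ∧ v ≤ x.1) := fun hc => hvC ⟨x, hx, h1, h2, hc.1, hc.2⟩
          have hxv' : ¬ (x.2 ≤ v' ∧ v' ≤ x.1) := fun hc => hv'C ⟨x, hx, h1, h2, hc.1, hc.2⟩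
          rcases lt_or_ge x.1 v with hxa1 | hxa1
          · right; left; exact hxa1
          · rcases lt_or_ge v x.2 with hxa2 | hxa2
            · rcases lt_or_ge v' x.2 with hxb | hxb
              · left; exact hxb
              · rcases lt_or_ge x.1 v' with hxc | hxc
                · right; right; right; exact ⟨hxa2, hxc⟩
                · exact absurd ⟨hxb, hxc⟩ hxv'
            · exact absurd ⟨hxa2, hxa1⟩ hxv
        · right; right; left
          exact ⟨by omega, by omega⟩
    have hmem : v' ∈ {y : ℤ | Isolated H y ∧ IsSmallestOverarc H a y} := by
      rw [hsetEq]; exact hv'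
    exact (hmem.1 ((v', v) : Arc) hzH).1 rfl
  -- auxiliary: the split of a window into covered and free parts
  have hsplit : ∀ s : Finset ℤ,
      (s.filter (fun x => Covered H a x)).card +
        (s.filter (fun x => ¬ Covered H a x)).card = s.card :=
    fun s => Finset.card_filter_add_card_filter_not _
  -- total count: the number of free vertices is ≡ -2 mod (1-w)
  have hVIoo : (1 - w) ∣
      (((Finset.Ioo a.2 a.1).filter (fun x => Covered H a x)).card : ℤ) := by
    apply key
    intro b hb _ z hz1 hz2
    obtain ⟨-, h2, h1⟩ := hChN b hb
    exact Finset.mem_Ioo.mpr ⟨by omega, by omega⟩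
  have hF2 : (1 - w) ∣ ((Fr.card : ℤ) + 2) := by
    obtain ⟨k, hk⟩ := ha'.2.2
    obtain ⟨c, hc⟩ := hVIoo
    have hIoo : ((Finset.Ioo a.2 a.1).card : ℤ) = a.1 - a.2 - 1 := by
      rw [Int.card_Ioo]
      exact Int.toNat_of_nonneg (by linarith [ha'.1])
    have hcast := congrArg (Nat.cast : ℕ → ℤ) (hsplit (Finset.Ioo a.2 a.1))
    push_cast at hcast
    rw [hIoo] at hcast
    refine ⟨k - c, ?_⟩
    have e : (1 - w) * (k - c) = (1 - w) * k - (1 - w) * c := by ring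
    rw [← hFr] at hcast
    linarith
  -- rank congruence: for a free vertex `v`, `v - a.2 ≡ rank v  mod (1-w)`
  have hrank : ∀ v ∈ Fr,
      (1 - w) ∣ (v - a.2 - ((Fr.filter (fun x => x ≤ v)).card : ℤ)) := by
    intro v hv
    obtain ⟨⟨hvl, hvr⟩, hvC⟩ := (hFrMem v).mp hv
    have hVsub : (1 - w) ∣
        (((Finset.Ioc a.2 v).filter (fun x => Covered H a x)).card : ℤ) := by
      apply key
      rintro b hb ⟨y, hyV, hy2, hy1⟩ z hz1 hz2
      obtain ⟨hbH, h2, h1⟩ := hChN b hb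
      rw [Finset.mem_Ioc] at hyV
      have hb1v : b.1 ≤ v := by
        by_contra hbv
        exact hvC ⟨b, hbH, h2, h1, by omega, by omega⟩
      exact Finset.mem_Ioc.mpr ⟨by omega, by omega⟩
    have hfeq : (Finset.Ioc a.2 v).filter (fun x => ¬ Covered H a x) =
        Fr.filter (fun x => x ≤ v) := by
      ext x
      simp only [Finset.mem_filter, Finset.mem_Ioc, hFrMem]
      constructor
      · rintro ⟨⟨hx1, hx2⟩, hxc⟩
        exact ⟨⟨⟨hx1, by omega⟩, hxc⟩, hx2⟩
      · rintro ⟨⟨⟨hx1, hx2⟩, hxc⟩, hxv⟩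
        exact ⟨⟨hx1, hxv⟩, hxc⟩
    have hIoc : ((Finset.Ioc a.2 v).card : ℤ) = v - a.2 := by
      rw [Int.card_Ioc]
      exact Int.toNat_of_nonneg (by omega)
    have hcast := congrArg (Nat.cast : ℕ → ℤ) (hsplit (Finset.Ioc a.2 v))
    push_cast at hcast
    rw [hIoc, hfeq] at hcast
    obtain ⟨c, hc⟩ := hVsub
    refine ⟨c, ?_⟩
    linarith
  -- the number of free vertices is < 1 - w
  have hFlt : ((Fr.card : ℤ)) < 1 - w := by
    by_contra hge
    push_neg at hge
    have hmono : ∀ v v' : ℤ, v ∈ Fr → v' ∈ Fr → v < v' →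
        (Fr.filter (fun x => x ≤ v)).card < (Fr.filter (fun x => x ≤ v')).card := by
      intro v v' hv hv' hlt
      apply Finset.card_lt_card
      rw [Finset.ssubset_iff_of_subset
        (Finset.monotone_filter_right Fr (fun x _ hx => le_trans hx (le_of_lt hlt)))]
      refine ⟨v', Finset.mem_filter.mpr ⟨hv', le_rfl⟩, ?_⟩
      intro hmem
      have := (Finset.mem_filter.mp hmem).2
      omega
    set f : ℤ → ℕ := fun v => (Fr.filter (fun x => x ≤ v)).card with hf
    have hinj : Set.InjOn f ↑Fr := by
      intro v hv v' hv' hEq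
      by_contra hne
      rcases lt_or_gt_of_ne hne with h | h
      · exact absurd hEq (Nat.ne_of_lt (hmono v v' (Finset.mem_coe.mp hv)
          (Finset.mem_coe.mp hv') h))
      · exact absurd hEq.symm (Nat.ne_of_lt (hmono v' v (Finset.mem_coe.mp hv')
          (Finset.mem_coe.mp hv) h))
    have himg : Fr.image f = Finset.Icc 1 Fr.card := by
      apply Finset.eq_of_subset_of_card_le
      · intro y hy
        obtain ⟨v, hv, rfl⟩ := Finset.mem_image.mp hy
        refine Finset.mem_Icc.mpr ⟨?_, ?_⟩
        · exact Finset.card_pos.mpr ⟨v, Finset.mem_filter.mpr ⟨hv, le_rfl⟩⟩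
        · exact Finset.card_le_card (Finset.filter_subset _ _)
      · rw [Finset.card_image_of_injOn hinj, Nat.card_Icc]
        omega
    have h1mem : (1 : ℕ) ∈ Fr.image f := by
      rw [himg]
      exact Finset.mem_Icc.mpr ⟨le_rfl, by omega⟩
    have hmmem : ((1 - w).toNat : ℕ) ∈ Fr.image f := by
      rw [himg]
      exact Finset.mem_Icc.mpr ⟨by omega, by omega⟩
    obtain ⟨v0, hv0, hfv0⟩ := Finset.mem_image.mp h1mem
    obtain ⟨v1, hv1, hfv1⟩ := Finset.mem_image.mp hmmem
    have hv01 : v0 < v1 := by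
      rcases lt_trichotomy v0 v1 with h | h | h
      · exact h
      · exfalso; rw [h] at hfv0; rw [hfv0] at hfv1; omega
      · exfalso
        have hlt' := hmono v1 v0 hv1 hv0 h
        have g0 : (Fr.filter (fun x => x ≤ v0)).card = 1 := hfv0
        have g1 : (Fr.filter (fun x => x ≤ v1)).card = (1 - w).toNat := hfv1
        omega
    obtain ⟨c0, hc0⟩ := hrank v0 hv0
    obtain ⟨c1, hc1⟩ := hrank v1 hv1
    apply hins v0 v1 hv0 hv1 hv01
    have g0 : (Fr.filter (fun x => x ≤ v0)).card = 1 := hfv0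
    have g1 : (Fr.filter (fun x => x ≤ v1)).card = (1 - w).toNat := hfv1
    have e0 : ((Fr.filter (fun x => x ≤ v0)).card : ℤ) = 1 := by rw [g0]; norm_num
    have e1 : ((Fr.filter (fun x => x ≤ v1)).card : ℤ) = 1 - w := by rw [g1]; omega
    refine ⟨c1 - c0 + 1, ?_⟩
    have e : (1 - w) * (c1 - c0 + 1) = (1 - w) * c1 - (1 - w) * c0 + (1 - w) := by ring
    linarith
  -- finish
  constructor
  · rw [hsetEq]; exact Fr.finite_toSet
  · rw [hsetEq, Set.ncard_coe_finset]
    obtain ⟨c, hc⟩ := hF2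
    have hFnn : (0:ℤ) ≤ (Fr.card : ℤ) := Int.natCast_nonneg _
    have hc1 : 0 < c := by
      by_contra hcle
      push_neg at hcle
      nlinarith
    have hc2 : c < 2 := by
      by_contra hcge
      push_neg at hcge
      nlinarith
    have : c = 1 := by omega
    rw [this, mul_one] at hc
    omega

end SphericalArcs
end
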